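/- arXiv:1303.6699 — 2 statements merged into one kernel-verified Lean document; each statement's English description precedes it below -/
import Mathlib

section
/- For s > 0, λ > 0, ν > 0, β > 0, m a positive integer, with s^ν > λ, the Laplace transform of t^{β-1} E^m_{ν,β}(-λ t^ν) equals s^{νm - β}/(λ + s^ν)^m. -/
open MeasureTheory Real Set

/-- Generalized (Prabhakar) Mittag-Leffler function
`E^m_{ν,β}(x) = Σ x^k Γ(m+k) / (k! Γ(νk+β) Γ(m))`. -/
noncomputable def MLP (ν β : ℝ) (m : ℕ) (x : ℝ) : ℝ :=
  ∑' k : ℕ, x ^ k * Real.Gamma ((m : ℝ) + k) /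
    ((k.factorial : ℝ) * Real.Gamma (ν * (k : ℝ) + β) * Real.Gamma (m : ℝ))

lemma gamma_ratio (m k : ℕ) (hm : 1 ≤ m) :
    Real.Gamma ((m : ℝ) + k) =
      (((k + (m - 1)).choose (m - 1) : ℕ) : ℝ) * k.factorial * Real.Gamma m := by
  have h1 : ((m : ℝ) + k) = ((m + k - 1 : ℕ) : ℝ) + 1 := by
    push_cast [Nat.cast_sub (by omega : 1 ≤ m + k)]; ring
  have h2 : ((m : ℝ)) = ((m - 1 : ℕ) : ℝ) + 1 := by
    push_cast [Nat.cast_sub hm]; ring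
  rw [h1, h2, Real.Gamma_nat_eq_factorial, Real.Gamma_nat_eq_factorial]
  have := Nat.choose_mul_factorial_mul_factorial (Nat.le_add_left (m-1) k)
  rw [Nat.add_sub_cancel] at this
  have hmk : k + (m - 1) = m + k - 1 := by omega
  rw [hmk] at this
  rw [show k + (m - 1) = m + k - 1 from hmk]
  push_cast [← this]
  ring

theorem laplace_MLP (s lam ν β : ℝ) (m : ℕ) (hs : 0 < s) (hlam : 0 < lam)
    (hν : 0 < ν) (hβ : 0 < β) (hm : 1 ≤ m) (hconv : lam < s ^ ν) :
    ∫ t in Set.Ioi (0 : ℝ),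
        Real.exp (-s * t) * (t ^ (β - 1) * MLP ν β m (-lam * t ^ ν))
      = s ^ (ν * m - β) / (lam + s ^ ν) ^ m := by
  have hsν : 0 < s ^ ν := rpow_pos_of_pos hs ν
  set r : ℝ := lam / s ^ ν with hrdef
  have hr0 : 0 < r := div_pos hlam hsν
  have hr1 : ‖r‖ < 1 := by
    rw [Real.norm_eq_abs, abs_of_pos hr0]
    rwa [div_lt_one hsν]
  set F : ℕ → ℝ → ℝ := fun k t =>
    ((-lam) ^ k * Real.Gamma ((m : ℝ) + k) /
      ((k.factorial : ℝ) * Real.Gamma (ν * k + β) * Real.Gamma m)) *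
      (t ^ (ν * k + β - 1) * Real.exp (-(s * t))) with hF
  have hβk : ∀ k : ℕ, 0 < ν * k + β := fun k => by positivity
  have hGpos : ∀ k : ℕ, 0 < Real.Gamma (ν * k + β) := fun k => Real.Gamma_pos_of_pos (hβk k)
  have hGm : 0 < Real.Gamma m := Real.Gamma_pos_of_pos (by exact_mod_cast hm.trans_lt' zero_lt_one)
  have hInt : ∀ k, IntegrableOn (F k) (Ioi 0) := by
    intro k
    apply Integrable.const_mul
    have := integrableOn_rpow_mul_exp_neg_mul_rpow
      (p := 1) (s := ν * k + β - 1) (b := s) (by linarith [hβk k]) zero_lt_one hs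
    simpa [Real.rpow_one, neg_mul, IntegrableOn] using this
  have hBase : ∀ k : ℕ, (∫ t in Ioi (0:ℝ), t ^ (ν * k + β - 1) * Real.exp (-(s * t)))
      = (1 / s) ^ (ν * k + β) * Real.Gamma (ν * k + β) :=
    fun k => integral_rpow_mul_exp_neg_mul_Ioi (hβk k) hs
  have hpow : ∀ k : ℕ, (1 / s) ^ (ν * k + β) = ((s ^ ν) ^ k * s ^ β)⁻¹ := by
    intro k
    rw [one_div, ← Real.rpow_natCast (s ^ ν) k, ← Real.rpow_mul hs.le,
      Real.inv_rpow hs.le, ← Real.rpow_add hs]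
  have hval : ∀ k : ℕ, (∫ t in Ioi (0:ℝ), F k t)
      = s ^ (-β) * ((((k + (m - 1)).choose (m - 1) : ℕ) : ℝ) * (-r) ^ k) := by
    intro k
    rw [hF]
    simp only []
    rw [MeasureTheory.integral_const_mul, hBase k, hpow k, gamma_ratio m k hm]
    have hfac : (k.factorial : ℝ) ≠ 0 := by positivity
    have hGne := (hGpos k).ne'
    have hGmne := hGm.ne'
    have hsβ : (0:ℝ) < s ^ β := rpow_pos_of_pos hs β
    have hsνk : (0:ℝ) < (s ^ ν) ^ k := pow_pos hsν k
    rw [Real.rpow_neg hs.le, hrdef, show -(lam / s ^ ν) = -lam / s ^ ν by ring, div_pow]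
    field_simp
  have hnormval : ∀ k : ℕ, (∫ t in Ioi (0:ℝ), ‖F k t‖)
      = s ^ (-β) * ((((k + (m - 1)).choose (m - 1) : ℕ) : ℝ) * r ^ k) := by
    intro k
    have hcongr : ∀ t ∈ Ioi (0:ℝ), ‖F k t‖ =
        (lam ^ k * Real.Gamma ((m : ℝ) + k) /
          ((k.factorial : ℝ) * Real.Gamma (ν * k + β) * Real.Gamma m)) *
          (t ^ (ν * k + β - 1) * Real.exp (-(s * t))) := by
      intro t ht
      rw [hF]
      simp only [Real.norm_eq_abs, abs_mul, abs_div, abs_mul, abs_pow, abs_neg,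
        abs_of_pos hlam, abs_of_pos (hGpos k), abs_of_pos hGm, Nat.abs_cast,
        abs_of_pos (Real.Gamma_pos_of_pos (show (0:ℝ) < (m:ℝ) + k by positivity)),
        abs_of_nonneg (Real.rpow_nonneg (le_of_lt ht) _),
        abs_of_nonneg (Real.exp_nonneg _)]
    rw [setIntegral_congr_fun measurableSet_Ioi hcongr,
      MeasureTheory.integral_const_mul, hBase k, hpow k, gamma_ratio m k hm]
    have hfac : (k.factorial : ℝ) ≠ 0 := by positivity
    have hGne := (hGpos k).ne'
    have hGmne := hGm.ne'
    have hsβ : (0:ℝ) < s ^ β := rpow_pos_of_pos hs β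
    have hsνk : (0:ℝ) < (s ^ ν) ^ k := pow_pos hsν k
    rw [Real.rpow_neg hs.le, hrdef, div_pow]
    field_simp
  have hsum : Summable fun k => ∫ t in Ioi (0:ℝ), ‖F k t‖ := by
    have h := (summable_choose_mul_geometric_of_norm_lt_one (m - 1) hr1).mul_left (s ^ (-β))
    apply Summable.congr h
    intro k
    rw [hnormval k]
  have hswap := MeasureTheory.integral_tsum_of_summable_integral_norm hInt hsum
  have hpt : ∀ t ∈ Ioi (0:ℝ),
      Real.exp (-s * t) * (t ^ (β - 1) * MLP ν β m (-lam * t ^ ν)) = ∑' k, F k t := by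
    intro t ht
    rw [MLP, ← tsum_mul_left, ← tsum_mul_left]
    apply tsum_congr
    intro k
    rw [hF]
    simp only []
    have h1 : (-lam * t ^ ν) ^ k = (-lam) ^ k * t ^ (ν * k) := by
      rw [mul_pow, ← Real.rpow_natCast (t ^ ν) k, ← Real.rpow_mul (le_of_lt ht)]
    have h2 : t ^ (ν * k + β - 1) = t ^ (β - 1) * t ^ (ν * (k:ℝ)) := by
      rw [← Real.rpow_add ht]; ring_nf
    rw [h1, h2, neg_mul, mul_div_assoc]
    ring
  rw [setIntegral_congr_fun measurableSet_Ioi hpt, ← hswap]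
  have htsum : ∑' k, ∫ t in Ioi (0:ℝ), F k t
      = s ^ (-β) * ∑' k : ℕ, (((k + (m - 1)).choose (m - 1) : ℕ) : ℝ) * (-r) ^ k := by
    rw [← tsum_mul_left]
    exact tsum_congr hval
  rw [htsum, tsum_choose_mul_geometric_of_norm_lt_one (m - 1) (by rwa [norm_neg])]
  have hm1 : m - 1 + 1 = m := by omega
  have h1r : 1 - (-r) = (lam + s ^ ν) / s ^ ν := by
    rw [hrdef]; field_simp; ring
  rw [hm1, h1r]
  have hl : 0 < lam + s ^ ν := by linarith
  rw [Real.rpow_sub hs, Real.rpow_neg hs.le, div_pow,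
    show s ^ (ν * m) = (s ^ ν) ^ m by
      rw [← Real.rpow_natCast (s ^ ν) m, ← Real.rpow_mul hs.le]]
  field_simp
end

section
/- For λ > 0, t > 0, and ν ∈ (0,1], the mean of the distribution q(j) = (λt)^j/(Γ(νj+1) E_{ν,1}(λt)) equals λt E_{ν,ν}(λt)/(ν E_{ν,1}(λt)), i.e., Σ_{j=0}^∞ j q(j) = λt E_{ν,ν}(λt)/(ν E_{ν,1}(λt)). -/
open Real

/-- Two-parameter Mittag-Leffler function `E_{ν,β}(x) = Σ x^k / Γ(νk+β)`. -/
noncomputable def ML (ν β x : ℝ) : ℝ := ∑' k : ℕ, x ^ k / Real.Gamma (ν * (k : ℝ) + β)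

theorem mean_fractional_poisson (lam t ν : ℝ) (hlam : 0 < lam) (ht : 0 < t)
    (hν : 0 < ν) (hν1 : ν ≤ 1) :
    ∑' j : ℕ, (j : ℝ) * ((lam * t) ^ j / (Real.Gamma (ν * (j : ℝ) + 1) * ML ν 1 (lam * t)))
      = lam * t * ML ν ν (lam * t) / (ν * ML ν 1 (lam * t)) := by
  set x := lam * t with hx
  set E := ML ν 1 x with hE
  by_cases hE0 : E = 0
  · simp [hE0]
  · set f : ℕ → ℝ := fun j => (j : ℝ) * (x ^ j / (Real.Gamma (ν * (j : ℝ) + 1) * E)) with hf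
    have hsucc : Function.Injective Nat.succ := Nat.succ_injective
    have hsupp : Function.support f ⊆ Set.range Nat.succ := by
      intro j hj
      rcases j with _ | k
      · simp [hf] at hj
      · exact ⟨k, rfl⟩
    have hshift := hsucc.tsum_eq hsupp
    rw [← hshift]
    have key : ∀ k : ℕ, f (Nat.succ k)
        = (x / (ν * E)) * (x ^ k / Real.Gamma (ν * (k : ℝ) + ν)) := by
      intro k
      have hne : ν * ((k : ℝ) + 1) ≠ 0 := by positivity
      have hΓpos : 0 < Real.Gamma (ν * (k : ℝ) + ν) := Real.Gamma_pos_of_pos (by positivity)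
      have harg : ν * ((Nat.succ k : ℕ) : ℝ) + 1 = ν * ((k : ℝ) + 1) + 1 := by
        push_cast; ring
      have harg2 : ν * ((k : ℝ) + 1) = ν * (k : ℝ) + ν := by ring
      rw [hf]
      simp only
      rw [harg, Real.Gamma_add_one hne, harg2]
      have hk1 : ((Nat.succ k : ℕ) : ℝ) = (k : ℝ) + 1 := by push_cast; ring
      rw [hk1]
      field_simp
      rw [Nat.succ_eq_add_one]
      ring
    rw [tsum_congr key, tsum_mul_left]
    rw [show ML ν ν x = ∑' k : ℕ, x ^ k / Real.Gamma (ν * (k : ℝ) + ν) from rfl]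
    rw [div_mul_eq_mul_div]
end
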